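/- Let E be a complex Hilbert space and let C₁, C₂ : E → E* be bounded operators with positive constants c₁, c₂ such that Re⟨C₁x,x⟩ ≥ c₁‖x‖², Im⟨C₁x,x⟩ ≤ 0, and Re⟨C₂x,x⟩ - Im⟨C₂x,x⟩ ≥ c₂‖x‖² for all x ∈ E. Then C₁ + C₂ is coercive in modulus: |⟨(C₁+C₂)x, x⟩| ≥ ((c₁+c₂)/√2)‖x‖² for all x ∈ E. -/

import Mathlib

/-- Combination of sign conditions: if `Re⟨C₁x,x⟩ ≥ c₁‖x‖²`, `Im⟨C₁x,x⟩ ≤ 0` and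
`Re⟨C₂x,x⟩ - Im⟨C₂x,x⟩ ≥ c₂‖x‖²`, then `C₁ + C₂` is coercive in modulus with constant
`(c₁+c₂)/√2`. -/
theorem stmt_4 (E : Type*) [NormedAddCommGroup E] [InnerProductSpace ℂ E] [CompleteSpace E]
    (C₁ C₂ : E →L[ℂ] (E →L⋆[ℂ] ℂ)) (c₁ c₂ : ℝ) (hc₁ : 0 < c₁) (hc₂ : 0 < c₂)
    (hRe₁ : ∀ x : E, c₁ * ‖x‖ ^ 2 ≤ (C₁ x x).re)
    (hIm₁ : ∀ x : E, (C₁ x x).im ≤ 0)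
    (h₂ : ∀ x : E, c₂ * ‖x‖ ^ 2 ≤ (C₂ x x).re - (C₂ x x).im) :
    ∀ x : E, ((c₁ + c₂) / Real.sqrt 2) * ‖x‖ ^ 2 ≤ ‖(C₁ + C₂) x x‖ := by
  intro x
  have hz : ((C₁ + C₂) x x) = C₁ x x + C₂ x x := by simp
  set z : ℂ := (C₁ + C₂) x x with hzdef
  have hlow : (c₁ + c₂) * ‖x‖ ^ 2 ≤ z.re - z.im := by
    have h1 := hRe₁ x
    have h2 := hIm₁ x
    have h3 := h₂ x
    rw [hz]
    simp only [Complex.add_re, Complex.add_im]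
    linarith
  have habs : z.re - z.im ≤ Real.sqrt 2 * ‖z‖ := by
    have hsq : (z.re - z.im) ^ 2 ≤ 2 * ‖z‖ ^ 2 := by
      rw [Complex.sq_norm, Complex.normSq_apply]
      nlinarith [sq_nonneg (z.re + z.im)]
    calc z.re - z.im ≤ |z.re - z.im| := le_abs_self _
      _ = Real.sqrt ((z.re - z.im) ^ 2) := (Real.sqrt_sq_eq_abs _).symm
      _ ≤ Real.sqrt (2 * ‖z‖ ^ 2) := Real.sqrt_le_sqrt hsq
      _ = Real.sqrt 2 * ‖z‖ := by
          rw [Real.sqrt_mul (by norm_num : (0:ℝ) ≤ 2), Real.sqrt_sq (norm_nonneg z)]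
  have hs : (0:ℝ) < Real.sqrt 2 := Real.sqrt_pos.mpr (by norm_num)
  rw [div_mul_eq_mul_div, div_le_iff₀ hs]
  calc (c₁ + c₂) * ‖x‖ ^ 2 ≤ z.re - z.im := hlow
    _ ≤ Real.sqrt 2 * ‖z‖ := habs
    _ = ‖z‖ * Real.sqrt 2 := mul_comm _ _
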